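/- Let C ◁ D be a normal subgroup of a finite group D such that the quotient D/C is cyclic, and let χ : C → ℂˣ be a homomorphism invariant under conjugation by D. Then χ extends to a homomorphism χ̃ : D → ℂˣ. -/

import Mathlib

/-- A conjugation-invariant character of a normal subgroup `C ◁ D` with cyclic
quotient extends to a character of the finite group `D`. -/
theorem invariant_character_extends_of_cyclic_quotient {D : Type*} [Group D]
    [Finite D] (C : Subgroup D) [C.Normal] [IsCyclic (D ⧸ C)]
    (χ : C →* ℂˣ)
    (hχ : ∀ (d : D) (c : C) (h : d⁻¹ * (c : D) * d ∈ C), χ ⟨d⁻¹ * c * d, h⟩ = χ c) :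
    ∃ χext : D →* ℂˣ, ∀ c : C, χext (c : D) = χ c := by
  classical
  obtain ⟨σ, hσ⟩ := IsCyclic.exists_generator (α := D ⧸ C)
  obtain ⟨g, rfl⟩ := QuotientGroup.mk_surjective σ
  set σ : D ⧸ C := QuotientGroup.mk g with hσdef
  set n : ℕ := orderOf σ with hn
  have hnpos : 0 < n := orderOf_pos σ
  have hgn : g ^ n ∈ C := by
    rw [← QuotientGroup.eq_one_iff]
    have : (QuotientGroup.mk (g ^ n) : D ⧸ C) = σ ^ n := by
      simp [hσdef]
    rw [this, pow_orderOf_eq_one]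
  set gn : C := ⟨g ^ n, hgn⟩ with hgndef
  -- choose an n-th root z of χ (g^n)
  obtain ⟨z0, hz0⟩ := IsAlgClosed.exists_pow_nat_eq ((χ gn : ℂˣ) : ℂ) hnpos
  have hz0ne : z0 ≠ 0 := by
    intro h
    rw [h, zero_pow hnpos.ne'] at hz0
    exact (χ gn).ne_zero hz0.symm
  set z : ℂˣ := Units.mk0 z0 hz0ne with hz
  have hzn : z ^ n = χ gn := by
    ext
    simpa [hz] using hz0
  -- membership criterion
  have memC : ∀ (k : ℤ) (d : D), (QuotientGroup.mk d : D ⧸ C) = σ ^ k ↔ g ^ (-k) * d ∈ C := by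
    intro k d
    rw [← QuotientGroup.eq_one_iff]
    have : (QuotientGroup.mk (g ^ (-k) * d) : D ⧸ C) = σ ^ (-k) * QuotientGroup.mk d := by
      simp [hσdef]
    rw [this]
    constructor
    · intro h; rw [h]; group
    · intro h
      have := congrArg (fun x => σ ^ k * x) h
      simpa [mul_assoc, ← zpow_add] using this
  -- key: value independent of the choice of exponent
  have key : ∀ (k j : ℤ) (d : D) (h : g ^ (-k) * d ∈ C) (h' : g ^ (-j) * d ∈ C),
      z ^ k * χ ⟨g ^ (-k) * d, h⟩ = z ^ j * χ ⟨g ^ (-j) * d, h'⟩ := by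
    intro k j d h h'
    have hσjk : σ ^ (j - k) = 1 := by
      have h1 : (QuotientGroup.mk d : D ⧸ C) = σ ^ k := (memC k d).mpr h
      have h2 : (QuotientGroup.mk d : D ⧸ C) = σ ^ j := (memC j d).mpr h'
      have : σ ^ j = σ ^ k := h2 ▸ h1
      rw [zpow_sub, this, mul_inv_cancel]
    obtain ⟨m, hm⟩ : (n : ℤ) ∣ (j - k) := orderOf_dvd_iff_zpow_eq_one.mpr hσjk
    have hdecomp : g ^ (-k) * d = (g ^ n) ^ m * (g ^ (-j) * d) := by
      have hkj : ((n : ℤ) * m) + (-j) = -k := by rw [← hm]; ring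
      rw [← mul_assoc, ← zpow_natCast g n, ← zpow_mul, ← zpow_add, hkj]
    have hcmem : ((gn ^ m * ⟨g ^ (-j) * d, h'⟩ : C) : D) = g ^ (-k) * d := by
      push_cast [hgndef]
      exact hdecomp.symm
    have hceq : (⟨g ^ (-k) * d, h⟩ : C) = gn ^ m * ⟨g ^ (-j) * d, h'⟩ :=
      Subtype.ext hcmem.symm
    rw [hceq, map_mul, map_zpow]
    have hzjk : z ^ j = z ^ k * (χ gn) ^ m := by
      rw [← hzn, ← zpow_natCast, ← zpow_mul, ← zpow_add]
      congr 1
      rw [← hm]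
      ring
    rw [hzjk, mul_assoc]
  -- the choice of exponent for each d
  have hex : ∀ d : D, ∃ k : ℤ, g ^ (-k) * d ∈ C := by
    intro d
    obtain ⟨k, hk⟩ := hσ (QuotientGroup.mk d)
    exact ⟨k, (memC k d).mp hk.symm⟩
  choose κ hκ using hex
  -- define the extension
  refine ⟨{ toFun := fun d => z ^ κ d * χ ⟨g ^ (-(κ d)) * d, hκ d⟩
            map_one' := ?_
            map_mul' := ?_ }, ?_⟩
  · have h0 : g ^ (-(0:ℤ)) * (1:D) ∈ C := by simpa using C.one_mem
    show z ^ κ 1 * χ ⟨g ^ (-(κ 1)) * 1, hκ 1⟩ = 1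
    rw [key (κ 1) 0 1 (hκ 1) h0]
    have : (⟨g ^ (-(0:ℤ)) * (1:D), h0⟩ : C) = 1 := by
      ext; simp
    rw [this]
    simp
  · intro a b
    have hconj : (g ^ (κ b))⁻¹ * ((⟨g ^ (-(κ a)) * a, hκ a⟩ : C) : D) * g ^ (κ b) ∈ C :=
      Subgroup.Normal.conj_mem' ‹C.Normal› _ (hκ a) _
    have hab : g ^ (-(κ a + κ b)) * (a * b) ∈ C := by
      have : g ^ (-(κ a + κ b)) * (a * b)
          = ((g ^ (κ b))⁻¹ * (g ^ (-(κ a)) * a) * g ^ (κ b)) * (g ^ (-(κ b)) * b) := by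
        rw [zpow_neg, zpow_add]
        group
      rw [this]
      exact C.mul_mem hconj (hκ b)
    rw [key (κ (a * b)) (κ a + κ b) (a * b) (hκ (a * b)) hab]
    have hsplit : (⟨g ^ (-(κ a + κ b)) * (a * b), hab⟩ : C)
        = ⟨_, hconj⟩ * ⟨g ^ (-(κ b)) * b, hκ b⟩ := by
      ext
      push_cast
      rw [zpow_neg, zpow_add]
      group
    rw [hsplit, map_mul, hχ (g ^ (κ b)) ⟨g ^ (-(κ a)) * a, hκ a⟩ hconj, zpow_add]
    exact (mul_mul_mul_comm _ _ _ _).symm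
  · intro c
    have h0 : g ^ (-(0:ℤ)) * (c : D) ∈ C := by simp [c.2]
    show z ^ κ (c : D) * χ ⟨g ^ (-(κ (c : D))) * (c : D), hκ (c : D)⟩ = χ c
    rw [key (κ (c : D)) 0 c (hκ (c : D)) h0]
    have : (⟨g ^ (-(0:ℤ)) * (c : D), h0⟩ : C) = c := by
      ext; simp
    rw [this]
    simp
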